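/- Let M ∈ {1,…,n} and s ∈ ℝ^n. For every y ∈ P_{A_n} and every u ∈ Z_{A_n}, the directional derivative (d/dt)|_{t=0} log Δ_{−s}^{(M)}(y + t·u) equals −tr(E_s^{(M)}(y)·u), where E_s^{(M)}(y) = Σ_{i=1}^{M−1}(s_i−s_{i+1})·[(y_{{1:i}})^{−1}]^0 + s_M·y^{−1} + Σ_{i=M+1}^{n}(s_i−s_{i−1})·[(y_{{i:n}})^{−1}]^0. Consequently the mean function of the Wishart family, −grad_y log Δ_{−s}^{(M)}(y) with respect to the trace pairing on Z_{A_n}, equals m_s^{(M)}(y) = π(E_s^{(M)}(y)). -/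

import Mathlib

open Matrix Finset

noncomputable section

/-- Tridiagonal symmetric real `n × n` matrices (the space `Z_G` for `G = A_n`). -/
def ZG (n : ℕ) : Set (Matrix (Fin n) (Fin n) ℝ) :=
  {y | y.IsSymm ∧ ∀ i j : Fin n, ((i : ℕ) + 1 < (j : ℕ) ∨ (j : ℕ) + 1 < (i : ℕ)) → y i j = 0}

/-- The cone `P_G` of positive definite matrices in `Z_G`. -/
def PG (n : ℕ) : Set (Matrix (Fin n) (Fin n) ℝ) :=
  {y | y ∈ ZG n ∧ y.PosDef}

/-- The dual cone `Q_G`. -/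
def QG (n : ℕ) : Set (Matrix (Fin n) (Fin n) ℝ) :=
  {η | η ∈ ZG n ∧ (∀ i : Fin n, 0 < η i i) ∧
    ∀ i j : Fin n, (i : ℕ) + 1 = (j : ℕ) → 0 < η i i * η j j - (η i j) ^ 2}

/-- The set of vertices `{i, i+1, …, j}` (vertices are `1`-based; vertex `v` is `⟨v-1, _⟩ : Fin n`). -/
def seg (n i j : ℕ) : Finset (Fin n) :=
  Finset.univ.filter fun a => i ≤ (a : ℕ) + 1 ∧ (a : ℕ) + 1 ≤ j

/-- Determinant of the submatrix of `y` with rows and columns indexed by `I`. -/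
def subdet {n : ℕ} (y : Matrix (Fin n) (Fin n) ℝ) (I : Finset (Fin n)) : ℝ :=
  (y.submatrix (fun a : {x : Fin n // x ∈ I} => a.1) (fun a : {x : Fin n // x ∈ I} => a.1)).det

/-- The projection `π` onto `I_G`, keeping only the entries with `|i - j| ≤ 1`. -/
def proj (n : ℕ) (A : Matrix (Fin n) (Fin n) ℝ) : Matrix (Fin n) (Fin n) ℝ :=
  Matrix.of fun i j => if (i : ℕ) ≤ (j : ℕ) + 1 ∧ (j : ℕ) ≤ (i : ℕ) + 1 then A i j else 0

/-- The submatrix of `y` with rows and columns indexed by `I`. -/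
def subm {n : ℕ} (y : Matrix (Fin n) (Fin n) ℝ) (I : Finset (Fin n)) :
    Matrix {x : Fin n // x ∈ I} {x : Fin n // x ∈ I} ℝ :=
  y.submatrix (fun a => a.1) (fun a => a.1)

/-- Extension by zero of a matrix indexed by `I` to an `n × n` matrix (the operation `(·)⁰`). -/
def zext {n : ℕ} (I : Finset (Fin n)) (A : Matrix {x : Fin n // x ∈ I} {x : Fin n // x ∈ I} ℝ) :
    Matrix (Fin n) (Fin n) ℝ :=
  Matrix.of fun i j =>
    if hi : i ∈ I then (if hj : j ∈ I then A ⟨i, hi⟩ ⟨j, hj⟩ else 0) else 0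

/-- The matrix `[(y_I)⁻¹]⁰`. -/
def subinv0 {n : ℕ} (y : Matrix (Fin n) (Fin n) ℝ) (I : Finset (Fin n)) :
    Matrix (Fin n) (Fin n) ℝ :=
  zext I (subm y I)⁻¹

/-- `E_s^{(M)}(y) = Σ_{i<M} (s_i - s_{i+1}) [(y_{1:i})⁻¹]⁰ + s_M y⁻¹
+ Σ_{i>M} (s_i - s_{i-1}) [(y_{i:n})⁻¹]⁰`; the mean map is `m_s^{(M)} = π ∘ E_s^{(M)}`. -/
def Emat (n M : ℕ) (s : ℕ → ℝ) (y : Matrix (Fin n) (Fin n) ℝ) :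
    Matrix (Fin n) (Fin n) ℝ :=
  (∑ i ∈ Finset.Ico 1 M, (s i - s (i + 1)) • subinv0 y (seg n 1 i)) + s M • y⁻¹ +
    ∑ i ∈ Finset.Ioc M n, (s i - s (i - 1)) • subinv0 y (seg n i n)

/-- The `M`-power function `Δ_s^{(M)}` on `P_{A_n}` (real exponents, `1`-based `s`). -/
def Delta (n M : ℕ) (s : ℕ → ℝ) (y : Matrix (Fin n) (Fin n) ℝ) : ℝ :=
  (∏ i ∈ Finset.Ico 1 M, subdet y (seg n 1 i) ^ (s i - s (i + 1))) * y.det ^ (s M) *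
    ∏ i ∈ Finset.Ioc M n, subdet y (seg n i n) ^ (s i - s (i - 1))


open Polynomial in
lemma hasDerivAt_det_aux {m : Type*} [Fintype m] [DecidableEq m]
    (A B : Matrix m m ℝ) (hA : IsUnit A.det) :
    HasDerivAt (fun t : ℝ => (A + t • B).det) (A.det * (A⁻¹ * B).trace) 0 := by
  have key : (fun t : ℝ => (A + t • B).det)
      = fun t : ℝ => A.det * (1 + (A⁻¹ * B).trace * t +
        ((1 + (X : ℝ[X]) • (A⁻¹ * B).map C).det).divX.divX.eval t * t ^ 2) := by
    funext t
    rw [← Matrix.det_one_add_smul t (A⁻¹ * B), ← Matrix.det_mul, Matrix.mul_add,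
      Matrix.mul_one, Matrix.mul_smul, ← Matrix.mul_assoc,
      Matrix.mul_nonsing_inv A hA, Matrix.one_mul]
  rw [key]
  set q := ((1 + (X : ℝ[X]) • (A⁻¹ * B).map C).det).divX.divX
  have h1 : HasDerivAt (fun t : ℝ => 1 + (A⁻¹ * B).trace * t + q.eval t * t ^ 2)
      ((A⁻¹ * B).trace) 0 := by
    have := ((hasDerivAt_const (0:ℝ) (1:ℝ)).add
      ((hasDerivAt_id (0:ℝ)).const_mul ((A⁻¹ * B).trace))).add
      ((q.hasDerivAt 0).mul (hasDerivAt_pow 2 (0:ℝ)))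
    refine HasDerivAt.congr_deriv this ?_
    simp
  simpa using h1.const_mul A.det

lemma hasDerivAt_log_det {m : Type*} [Fintype m] [DecidableEq m]
    (A B : Matrix m m ℝ) (hA : A.PosDef) :
    HasDerivAt (fun t : ℝ => Real.log ((A + t • B).det)) ((A⁻¹ * B).trace) 0 := by
  have hd := hasDerivAt_det_aux A B (isUnit_iff_ne_zero.mpr hA.det_pos.ne')
  have h0 : (A + (0:ℝ) • B).det ≠ 0 := by simpa using hA.det_pos.ne'
  have := hd.log h0
  simpa [mul_div_assoc, mul_div_cancel_left₀ _ hA.det_pos.ne'] using this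

lemma sum_extend {n : ℕ} (I : Finset (Fin n)) (f : ∀ i : Fin n, i ∈ I → ℝ) :
    (∑ i : Fin n, if h : i ∈ I then f i h else 0) = ∑ p : {x : Fin n // x ∈ I}, f p.1 p.2 := by
  have h1 : (∑ i : Fin n, if h : i ∈ I then f i h else 0)
      = ∑ i ∈ I, (if h : i ∈ I then f i h else 0) :=
    (Finset.sum_subset (Finset.subset_univ I) fun x _ hx => dif_neg hx).symm
  rw [h1, ← Finset.sum_attach I (fun i => if h : i ∈ I then f i h else 0),
    Finset.univ_eq_attach]
  exact Finset.sum_congr rfl fun p _ => dif_pos p.2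

lemma posdef_subm {n : ℕ} {y : Matrix (Fin n) (Fin n) ℝ} (hy : y.PosDef) (I : Finset (Fin n)) :
    (subm y I).PosDef := by
  exact hy.submatrix Subtype.val_injective

lemma trace_zext_mul {n : ℕ} (I : Finset (Fin n))
    (A : Matrix {x : Fin n // x ∈ I} {x : Fin n // x ∈ I} ℝ)
    (u : Matrix (Fin n) (Fin n) ℝ) :
    (zext I A * u).trace = (A * subm u I).trace := by
  simp only [Matrix.trace, Matrix.diag, Matrix.mul_apply, zext, subm, Matrix.of_apply,
    Matrix.submatrix_apply]
  rw [← sum_extend I (fun i hi => ∑ q : {x : Fin n // x ∈ I}, A ⟨i, hi⟩ q * u q.1 i)]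
  refine Finset.sum_congr rfl fun i _ => ?_
  by_cases h : i ∈ I
  · rw [dif_pos h, ← sum_extend I (fun j hj => A ⟨i, h⟩ ⟨j, hj⟩ * u j i)]
    refine Finset.sum_congr rfl fun j _ => ?_
    by_cases hj : j ∈ I <;> simp [h, hj]
  · rw [dif_neg h]
    refine Finset.sum_eq_zero fun j _ => ?_
    simp [h]

/-- The directional derivative of `log Δ_{-s}^{(M)}` at `y ∈ P_{A_n}` in the direction
`u ∈ Z_{A_n}` is `-tr(E_s^{(M)}(y) u)`; consequently the mean function of the Wishart family,
i.e. minus the gradient of `log Δ_{-s}^{(M)}` w.r.t. the trace pairing on `Z_{A_n}`, is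
`m_s^{(M)}(y) = π(E_s^{(M)}(y))`. -/
theorem stmt11 (n : ℕ) (M : ℕ) (hM1 : 1 ≤ M) (hMn : M ≤ n) (s : ℕ → ℝ)
    (y : Matrix (Fin n) (Fin n) ℝ) (hy : y ∈ PG n)
    (u : Matrix (Fin n) (Fin n) ℝ) (hu : u ∈ ZG n) :
    HasDerivAt (fun t : ℝ => Real.log (Delta n M (fun i => -(s i)) (y + t • u)))
      (-(Matrix.trace (Emat n M s y * u))) 0 ∧
    Matrix.trace (Emat n M s y * u) = Matrix.trace (proj n (Emat n M s y) * u) := by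
  obtain ⟨hyZ, hyP⟩ := hy
  constructor
  · -- the derivative statement
    -- derivative pieces
    have hsubd : ∀ (I : Finset (Fin n)) (t : ℝ), subdet (y + t • u) I
        = (subm y I + t • subm u I).det := fun I t => rfl
    have hpieceI : ∀ I : Finset (Fin n),
        HasDerivAt (fun t : ℝ => Real.log (subdet (y + t • u) I))
          (((subm y I)⁻¹ * subm u I).trace) 0 := fun I =>
      hasDerivAt_log_det (subm y I) (subm u I) (posdef_subm hyP I)
    have hpiece0 : HasDerivAt (fun t : ℝ => Real.log ((y + t • u).det))
        ((y⁻¹ * u).trace) 0 := hasDerivAt_log_det y u hyP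
    -- the smooth substitute function F
    set F : ℝ → ℝ := fun t =>
      (∑ i ∈ Finset.Ico 1 M,
        (-(s i) - -(s (i + 1))) * Real.log (subdet (y + t • u) (seg n 1 i)))
      + (-(s M)) * Real.log ((y + t • u).det)
      + ∑ i ∈ Finset.Ioc M n,
        (-(s i) - -(s (i - 1))) * Real.log (subdet (y + t • u) (seg n i n)) with hF
    have hFderiv : HasDerivAt F
        ((∑ i ∈ Finset.Ico 1 M,
          (-(s i) - -(s (i + 1))) * ((subm y (seg n 1 i))⁻¹ * subm u (seg n 1 i)).trace)
        + (-(s M)) * (y⁻¹ * u).trace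
        + ∑ i ∈ Finset.Ioc M n,
          (-(s i) - -(s (i - 1))) * ((subm y (seg n i n))⁻¹ * subm u (seg n i n)).trace) 0 := by
      refine HasDerivAt.add (HasDerivAt.add ?_ ?_) ?_
      · exact HasDerivAt.fun_sum fun i _ => (hpieceI (seg n 1 i)).const_mul _
      · exact hpiece0.const_mul _
      · exact HasDerivAt.fun_sum fun i _ => (hpieceI (seg n i n)).const_mul _
    -- eventual positivity
    have hposI : ∀ I : Finset (Fin n), ∀ᶠ t in nhds (0:ℝ), 0 < subdet (y + t • u) I := by
      intro I
      have hc : ContinuousAt (fun t : ℝ => (subm y I + t • subm u I).det) 0 :=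
        (hasDerivAt_det_aux (subm y I) (subm u I)
          (isUnit_iff_ne_zero.mpr (posdef_subm hyP I).det_pos.ne')).continuousAt
      have h00 : (0:ℝ) < (subm y I + (0:ℝ) • subm u I).det := by
        simpa using (posdef_subm hyP I).det_pos
      have := hc.eventually_mem (s := Set.Ioi (0:ℝ)) ?_
      · exact this
      · exact Ioi_mem_nhds h00
    have hpos0 : ∀ᶠ t in nhds (0:ℝ), 0 < (y + t • u).det := by
      have hc : ContinuousAt (fun t : ℝ => (y + t • u).det) 0 :=
        (hasDerivAt_det_aux y u (isUnit_iff_ne_zero.mpr hyP.det_pos.ne')).continuousAt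
      have h00 : (0:ℝ) < (y + (0:ℝ) • u).det := by simpa using hyP.det_pos
      exact hc.eventually_mem (Ioi_mem_nhds h00)
    have hall1 : ∀ᶠ t in nhds (0:ℝ), ∀ i ∈ Finset.Ico 1 M,
        0 < subdet (y + t • u) (seg n 1 i) :=
      (Finset.eventually_all _).2 fun i _ => hposI _
    have hall2 : ∀ᶠ t in nhds (0:ℝ), ∀ i ∈ Finset.Ioc M n,
        0 < subdet (y + t • u) (seg n i n) :=
      (Finset.eventually_all _).2 fun i _ => hposI _
    -- log Delta = F eventually
    have hlog : ∀ w : Matrix (Fin n) (Fin n) ℝ,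
        (∀ i ∈ Finset.Ico 1 M, 0 < subdet w (seg n 1 i)) → 0 < w.det →
        (∀ i ∈ Finset.Ioc M n, 0 < subdet w (seg n i n)) →
        Real.log (Delta n M (fun i => -(s i)) w)
        = (∑ i ∈ Finset.Ico 1 M,
            (-(s i) - -(s (i + 1))) * Real.log (subdet w (seg n 1 i)))
          + (-(s M)) * Real.log (w.det)
          + ∑ i ∈ Finset.Ioc M n,
            (-(s i) - -(s (i - 1))) * Real.log (subdet w (seg n i n)) := by
      intro w h1 h2 h3
      have hp1 : (0:ℝ) < ∏ i ∈ Finset.Ico 1 M, subdet w (seg n 1 i) ^ (-(s i) - -(s (i + 1))) :=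
        Finset.prod_pos fun i hi => Real.rpow_pos_of_pos (h1 i hi) _
      have hp2 : (0:ℝ) < w.det ^ (-(s M)) := Real.rpow_pos_of_pos h2 _
      have hp3 : (0:ℝ) < ∏ i ∈ Finset.Ioc M n, subdet w (seg n i n) ^ (-(s i) - -(s (i - 1))) :=
        Finset.prod_pos fun i hi => Real.rpow_pos_of_pos (h3 i hi) _
      unfold Delta
      rw [Real.log_mul (mul_pos hp1 hp2).ne' hp3.ne', Real.log_mul hp1.ne' hp2.ne',
        Real.log_prod (fun i hi => (Real.rpow_pos_of_pos (h1 i hi) _).ne'),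
        Real.log_prod (fun i hi => (Real.rpow_pos_of_pos (h3 i hi) _).ne'),
        Real.log_rpow h2,
        Finset.sum_congr rfl (fun i hi => Real.log_rpow (h1 i hi) ((fun i => -(s i)) i - (fun i => -(s i)) (i+1))),
        Finset.sum_congr rfl (fun i hi => Real.log_rpow (h3 i hi) ((fun i => -(s i)) i - (fun i => -(s i)) (i-1)))]
    have hev : (fun t : ℝ => Real.log (Delta n M (fun i => -(s i)) (y + t • u))) =ᶠ[nhds 0] F := by
      filter_upwards [hall1, hpos0, hall2] with t h1 h2 h3
      exact hlog (y + t • u) h1 h2 h3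
    -- identify the derivative value
    have hval : (∑ i ∈ Finset.Ico 1 M,
          (-(s i) - -(s (i + 1))) * ((subm y (seg n 1 i))⁻¹ * subm u (seg n 1 i)).trace)
        + (-(s M)) * (y⁻¹ * u).trace
        + ∑ i ∈ Finset.Ioc M n,
          (-(s i) - -(s (i - 1))) * ((subm y (seg n i n))⁻¹ * subm u (seg n i n)).trace
        = -(Matrix.trace (Emat n M s y * u)) := by
      simp only [Emat, subinv0, Matrix.add_mul, Matrix.trace_add, Matrix.sum_mul,
        Matrix.trace_sum, Matrix.smul_mul, Matrix.trace_smul, smul_eq_mul, trace_zext_mul]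
      rw [neg_add, neg_add, ← Finset.sum_neg_distrib, ← Finset.sum_neg_distrib]
      congr 1
      · congr 1
        · exact Finset.sum_congr rfl fun i _ => by ring
        · ring
      · exact Finset.sum_congr rfl fun i _ => by ring
    rw [← hval]
    exact hFderiv.congr_of_eventuallyEq hev
  · -- the projection statement
    have h2 : ∀ A : Matrix (Fin n) (Fin n) ℝ, (A * u).trace = (proj n A * u).trace := by
      intro A
      simp only [Matrix.trace, Matrix.diag, Matrix.mul_apply, proj, Matrix.of_apply]
      refine Finset.sum_congr rfl fun i _ => Finset.sum_congr rfl fun j _ => ?_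
      by_cases h : (i : ℕ) ≤ (j : ℕ) + 1 ∧ (j : ℕ) ≤ (i : ℕ) + 1
      · rw [if_pos h]
      · rw [if_neg h, zero_mul, hu.2 j i ?_, mul_zero]
        push_neg at h
        rcases le_or_gt (i : ℕ) ((j : ℕ) + 1) with h' | h'
        · exact Or.inr (h h')
        · exact Or.inl h'
    exact h2 (Emat n M s y)
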